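/- Let C be a coframe and L ⊆ C a subframe that meet-generates C, and let f : C → D be a map to a coframe D that preserves arbitrary meets and preserves all joins of elements of L. Then f preserves finite joins of C, hence is a coframe homomorphism. -/
import Mathlib

private lemma key_sup_sInf {α : Type*} [Order.Coframe α] (S T : Set α) :
    sInf S ⊔ sInf T = sInf ((fun p : α × α => p.1 ⊔ p.2) '' (S ×ˢ T)) := by
  rw [sInf_image]
  rw [sInf_sup_eq]
  apply le_antisymm
  · refine le_iInf₂ fun p hp => ?_
    obtain ⟨hs, ht⟩ := hp
    refine le_trans (iInf₂_le p.1 hs) ?_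
    rw [sup_sInf_eq]
    exact iInf₂_le p.2 ht
  · refine le_iInf₂ fun s hs => ?_
    rw [sup_sInf_eq]
    refine le_iInf₂ fun t ht => ?_
    exact iInf₂_le (s, t) ⟨hs, ht⟩

/-- Let `C` be a coframe, `L ⊆ C` a subframe (closed under arbitrary joins and finite
meets of `C`) that meet-generates `C`, and `f : C → D` a map to a coframe preserving
arbitrary meets and all joins of elements of `L`. Then `f` preserves finite joins,
hence is a coframe homomorphism. -/
theorem stmt18 {C D : Type*} [Order.Coframe C] [Order.Coframe D] (L : Set C)
    (hJoin : ∀ S : Set C, S ⊆ L → sSup S ∈ L)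
    (hTop : ⊤ ∈ L) (hInf : ∀ a ∈ L, ∀ b ∈ L, a ⊓ b ∈ L)
    (hGen : ∀ c : C, ∃ S : Set C, S ⊆ L ∧ c = sInf S)
    (f : C → D)
    (hMeets : ∀ S : Set C, f (sInf S) = sInf (f '' S))
    (hLJoins : ∀ S : Set C, S ⊆ L → f (sSup S) = sSup (f '' S)) :
    f ⊥ = ⊥ ∧ ∀ c d : C, f (c ⊔ d) = f c ⊔ f d := by
  have hpair : ∀ a ∈ L, ∀ b ∈ L, f (a ⊔ b) = f a ⊔ f b := by
    intro a ha b hb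
    have h := hLJoins {a, b} (by rintro x (rfl | rfl) <;> assumption)
    simpa [Set.image_insert_eq] using h
  constructor
  · have h := hLJoins ∅ (Set.empty_subset L)
    simpa using h
  · intro c d
    obtain ⟨S, hS, rfl⟩ := hGen c
    obtain ⟨T, hT, rfl⟩ := hGen d
    rw [key_sup_sInf, hMeets, hMeets, hMeets, key_sup_sInf]
    congr 1
    rw [Set.image_image, Set.prod_image_image_eq, Set.image_image]
    apply Set.image_congr
    rintro ⟨s, t⟩ ⟨hs, ht⟩
    exact hpair s (hS hs) t (hT ht)
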